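/- Let K be a field of characteristic not 2 and let τ be the K-automorphism of K(x,y) with τ(x) = −x and τ(y) = f(x²)·N_τ(g(x))/y, where f, g ∈ K[x] and N_τ(g(x)) = g(x)g(−x). Set y' = y/g(x), X = (y' + f(x²)/y')/2, Y = (y' − f(x²)/y')/(2x), Z = x². Then K(x,y)^⟨τ⟩ = K(X, Y, Z) and these generators satisfy the relation X² − Z·Y² = f(Z). -/

import Mathlib

open MvPolynomial IntermediateField

theorem fixed_field_thInv (K F : Type*) [Field K] [Field F]
    [Algebra K F] [Algebra (MvPolynomial (Fin 2) K) F]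
    [IsScalarTower K (MvPolynomial (Fin 2) K) F]
    [IsFractionRing (MvPolynomial (Fin 2) K) F]
    (h2 : (2 : K) ≠ 0)
    (f g : Polynomial K)
    (x y : F)
    (hx : x = algebraMap (MvPolynomial (Fin 2) K) F (X 0))
    (hy : y = algebraMap (MvPolynomial (Fin 2) K) F (X 1))
    (hf : Polynomial.aeval (x ^ 2) f ≠ 0)
    (hg : Polynomial.aeval x g ≠ 0)
    (τ : F ≃ₐ[K] F)
    (hτx : τ x = -x)
    (hτy : τ y = Polynomial.aeval (x ^ 2) f *
        (Polynomial.aeval x g * Polynomial.aeval (-x) g) / y)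
    (y' Xg Yg Zg : F)
    (hy' : y' = y / Polynomial.aeval x g)
    (hX : Xg = (y' + Polynomial.aeval (x ^ 2) f / y') / 2)
    (hY : Yg = (y' - Polynomial.aeval (x ^ 2) f / y') / (2 * x))
    (hZ : Zg = x ^ 2) :
    fixedField (Subgroup.zpowers τ) = adjoin K {Xg, Yg, Zg} ∧
      Xg ^ 2 - Zg * Yg ^ 2 = Polynomial.aeval Zg f := by
  have hinj : Function.Injective (algebraMap (MvPolynomial (Fin 2) K) F) :=
    IsFractionRing.injective _ _
  have hx0 : x ≠ 0 := by
    rw [hx]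
    intro h
    exact MvPolynomial.X_ne_zero 0 (hinj (h.trans (map_zero _).symm))
  have hy0 : y ≠ 0 := by
    rw [hy]
    intro h
    exact MvPolynomial.X_ne_zero 1 (hinj (h.trans (map_zero _).symm))
  have h2F : (2 : F) ≠ 0 := by
    rw [show (2 : F) = algebraMap K F 2 from (map_ofNat (algebraMap K F) 2).symm]
    exact (map_ne_zero _).mpr h2
  have hy'0 : y' ≠ 0 := hy' ▸ div_ne_zero hy0 hg
  have hτx2 : τ (x ^ 2) = x ^ 2 := by rw [map_pow, hτx]; ring
  have hτf : τ (Polynomial.aeval (x ^ 2) f) = Polynomial.aeval (x ^ 2) f := by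
    rw [← Polynomial.aeval_algHom_apply τ, hτx2]
  have hτg : τ (Polynomial.aeval x g) = Polynomial.aeval (-x) g := by
    rw [← Polynomial.aeval_algHom_apply τ, hτx]
  have hτgn : τ (Polynomial.aeval (-x) g) = Polynomial.aeval x g := by
    rw [← Polynomial.aeval_algHom_apply τ, map_neg, hτx, neg_neg]
  have hgn : Polynomial.aeval (-x) g ≠ 0 := by
    intro h
    apply hg
    rw [← hτgn, h, map_zero]
  have hτy' : τ y' = Polynomial.aeval (x ^ 2) f / y' := by
    rw [hy', map_div₀, hτy, hτg]
    field_simp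
  have hτ2 : τ (2 : F) = 2 := map_ofNat τ 2
  have hfy' : Polynomial.aeval (x ^ 2) f / y' ≠ 0 := div_ne_zero hf hy'0
  have hτX : τ Xg = Xg := by
    rw [hX, map_div₀, map_add, hτy', map_div₀, hτf, hτy', hτ2]
    field_simp
    ring
  have hτY : τ Yg = Yg := by
    rw [hY, map_div₀, map_sub, hτy', map_div₀, hτf, hτy', map_mul, hτ2, hτx]
    field_simp
    ring
  have hτZ : τ Zg = Zg := hZ ▸ hτx2
  set L : IntermediateField K F := adjoin K {Xg, Yg, Zg} with hL
  have hXgL : Xg ∈ L := subset_adjoin _ _ (by simp)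
  have hYgL : Yg ∈ L := subset_adjoin _ _ (by simp)
  have hZgL : Zg ∈ L := subset_adjoin _ _ (by simp)
  -- τ fixes everything in L
  have hLfix : ∀ a ∈ L, τ a = a := by
    intro a ha
    induction ha using IntermediateField.adjoin_induction with
    | mem b hb =>
      rcases hb with rfl | rfl | rfl
      · exact hτX
      · exact hτY
      · exact hτZ
    | algebraMap c => exact τ.commutes c
    | add b c _ _ hb hc => rw [map_add, hb, hc]
    | inv b _ hb => rw [map_inv₀, hb]
    | mul b c _ _ hb hc => rw [map_mul, hb, hc]
  -- every element of F has the form u + v * x with u v ∈ L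
  have hrep : ∀ a : F, ∃ u ∈ L, ∃ v ∈ L, a = u + v * x := by
    have hmain : ∀ a : F, a ∈ adjoin K {Xg, Yg, Zg, x} := by
      intro a
      obtain ⟨p, q, hq, rfl⟩ := IsFractionRing.div_surjective
        (A := MvPolynomial (Fin 2) K) a
      have hPoly : ∀ p : MvPolynomial (Fin 2) K,
          algebraMap (MvPolynomial (Fin 2) K) F p ∈ adjoin K {Xg, Yg, Zg, x} := by
        intro p
        induction p using MvPolynomial.induction_on with
        | C c =>
          rw [← MvPolynomial.algebraMap_eq, ← IsScalarTower.algebraMap_apply]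
          exact IntermediateField.algebraMap_mem _ c
        | add p q hp hq => rw [map_add]; exact add_mem hp hq
        | mul_X p i hp =>
          rw [map_mul]
          refine mul_mem hp ?_
          fin_cases i
          · show algebraMap (MvPolynomial (Fin 2) K) F (X 0) ∈ _
            exact hx ▸ subset_adjoin _ _ (by simp)
          · show algebraMap (MvPolynomial (Fin 2) K) F (X 1) ∈ _
            -- y ∈ adjoin: y = (Xg + x * Yg) * aeval x g
            have hxS : x ∈ adjoin K {Xg, Yg, Zg, x} := subset_adjoin _ _ (by simp)
            have hXS : Xg ∈ adjoin K {Xg, Yg, Zg, x} := subset_adjoin _ _ (by simp)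
            have hYS : Yg ∈ adjoin K {Xg, Yg, Zg, x} := subset_adjoin _ _ (by simp)
            have hgS : Polynomial.aeval x g ∈ adjoin K {Xg, Yg, Zg, x} := by
              have h1 : Polynomial.aeval x g ∈ Algebra.adjoin K {x} :=
                Polynomial.aeval_mem_adjoin_singleton _ _
              have h2 : Algebra.adjoin K {x} ≤ (adjoin K {Xg, Yg, Zg, x}).toSubalgebra :=
                Algebra.adjoin_le (by simpa using hxS)
              exact h2 h1
            have hyeq : algebraMap (MvPolynomial (Fin 2) K) F (X 1) =
                (Xg + x * Yg) * Polynomial.aeval x g := by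
              rw [← hy, hX, hY]
              have : y = y' * Polynomial.aeval x g := by
                rw [hy']; field_simp
              rw [this]
              congr 1
              field_simp
              ring
            rw [hyeq]
            exact mul_mem (add_mem hXS (mul_mem hxS hYS)) hgS
      exact div_mem (hPoly p) (hPoly q)
    intro a
    have ha := hmain a
    induction ha using IntermediateField.adjoin_induction with
    | mem b hb =>
      rcases hb with rfl | rfl | rfl | rfl
      · exact ⟨b, hXgL, 0, zero_mem _, by ring⟩
      · exact ⟨b, hYgL, 0, zero_mem _, by ring⟩
      · exact ⟨b, hZgL, 0, zero_mem _, by ring⟩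
      · exact ⟨0, zero_mem _, 1, one_mem _, by ring⟩
    | algebraMap c => exact ⟨algebraMap K F c, IntermediateField.algebraMap_mem _ c, 0, zero_mem _, by ring⟩
    | add b c _ _ hb hc =>
      obtain ⟨u₁, hu₁, v₁, hv₁, rfl⟩ := hb
      obtain ⟨u₂, hu₂, v₂, hv₂, rfl⟩ := hc
      exact ⟨u₁ + u₂, add_mem hu₁ hu₂, v₁ + v₂, add_mem hv₁ hv₂, by ring⟩
    | mul b c _ _ hb hc =>
      obtain ⟨u₁, hu₁, v₁, hv₁, rfl⟩ := hb
      obtain ⟨u₂, hu₂, v₂, hv₂, rfl⟩ := hc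
      refine ⟨u₁ * u₂ + v₁ * v₂ * Zg, by
        exact add_mem (mul_mem hu₁ hu₂) (mul_mem (mul_mem hv₁ hv₂) hZgL),
        u₁ * v₂ + u₂ * v₁, add_mem (mul_mem hu₁ hv₂) (mul_mem hu₂ hv₁), ?_⟩
      rw [hZ]; ring
    | inv b _ hb =>
      obtain ⟨u, hu, v, hv, rfl⟩ := hb
      by_cases hb0 : u + v * x = 0
      · exact ⟨0, zero_mem _, 0, zero_mem _, by rw [hb0]; simp⟩
      · have hτb : τ (u + v * x) = u - v * x := by
          rw [map_add, map_mul, hLfix u hu, hLfix v hv, hτx]; ring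
        have hτb0 : u - v * x ≠ 0 := by
          intro h
          apply hb0
          apply τ.injective
          rw [hτb, h, map_zero]
        have hd : u ^ 2 - v ^ 2 * Zg ≠ 0 := by
          rw [hZ]
          have : u ^ 2 - v ^ 2 * x ^ 2 = (u + v * x) * (u - v * x) := by ring
          rw [this]
          exact mul_ne_zero hb0 hτb0
        refine ⟨u / (u ^ 2 - v ^ 2 * Zg),
          div_mem hu (sub_mem (pow_mem hu 2) (mul_mem (pow_mem hv 2) hZgL)),
          -v / (u ^ 2 - v ^ 2 * Zg),
          div_mem (neg_mem hv) (sub_mem (pow_mem hu 2) (mul_mem (pow_mem hv 2) hZgL)), ?_⟩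
        rw [hZ] at hd ⊢
        refine inv_eq_of_mul_eq_one_right ?_
        field_simp
        ring
  -- fixedField = L
  have hfixL : fixedField (Subgroup.zpowers τ) = L := by
    apply le_antisymm
    · intro a ha
      have hτa : τ a = a := ha ⟨τ, Subgroup.mem_zpowers τ⟩
      obtain ⟨u, hu, v, hv, rfl⟩ := hrep a
      have h1 : u + v * x = u - v * x := by
        conv_lhs => rw [← hτa]
        rw [map_add, map_mul, hLfix u hu, hLfix v hv, hτx]
        ring
      have hv0 : v = 0 := by
        have h3 : (2 : F) * (v * x) = 0 := by linear_combination h1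
        rcases mul_eq_zero.mp h3 with h | h
        · exact absurd h h2F
        · rcases mul_eq_zero.mp h with h | h
          · exact h
          · exact absurd h hx0
      rw [hv0]
      simpa using hu
    · intro a ha
      intro σ
      obtain ⟨n, hn⟩ := σ.2
      show σ.1 a = a
      rw [← hn]
      have key : ∀ m : ℕ, (τ ^ m) a = a := by
        intro m
        induction m with
        | zero => rfl
        | succ m ih => rw [pow_succ, AlgEquiv.mul_apply, hLfix a ha, ih]
      show (τ ^ n) a = a
      rcases n with n | n
      · simpa using key n
      · rw [zpow_negSucc]
        apply (τ ^ (n + 1)).injective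
        rw [key (n + 1)]
        exact (τ ^ (n + 1)).apply_symm_apply a
  constructor
  · exact hfixL
  · rw [hX, hY, hZ]
    field_simp
    ring
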